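/- For a positive definite n×n complex matrix A with all eigenvalues in [m,M] (0 < m < M) and a unit vector x, the inequality ⟨A⁻¹x, x⟩ ≤ ((M+m)²/(4Mm))·⟨Ax, x⟩⁻¹ - ((M+m)⟨Ax,x⟩ - Mm - ⟨A²x,x⟩)/M³ holds, improving the Kantorovich inequality. -/

import Mathlib

open Matrix ComplexOrder

/-- Improved Kantorovich inequality: for a positive definite matrix `A` with all
eigenvalues in `[m, M]` (`0 < m < M`) and a unit vector `x`,
`⟨A⁻¹ x, x⟩ ≤ ((M+m)^2/(4 M m)) ⟨A x, x⟩⁻¹ - ((M+m)⟨A x,x⟩ - M m - ⟨A² x,x⟩)/M³`. -/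
theorem improved_kantorovich {n : ℕ} (A : Matrix (Fin n) (Fin n) ℂ)
    (hA : A.PosDef) (m M : ℝ) (hm : 0 < m) (hmM : m < M)
    (heig : ∀ i, hA.isHermitian.eigenvalues i ∈ Set.Icc m M)
    (x : Fin n → ℂ) (hx : star x ⬝ᵥ x = 1) :
    (star x ⬝ᵥ (A⁻¹ *ᵥ x)).re
      ≤ (M + m) ^ 2 / (4 * M * m) * ((star x ⬝ᵥ (A *ᵥ x)).re)⁻¹
          - ((M + m) * (star x ⬝ᵥ (A *ᵥ x)).re - M * m
              - (star x ⬝ᵥ ((A ^ 2) *ᵥ x)).re) / M ^ 3 := by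
  have hM : (0:ℝ) < M := hm.trans hmM
  set U : Matrix (Fin n) (Fin n) ℂ := (hA.isHermitian.eigenvectorUnitary : Matrix (Fin n) (Fin n) ℂ) with hU
  set lam := hA.isHermitian.eigenvalues with hlam
  set y := star U *ᵥ x with hy
  set t : Fin n → ℝ := fun i => ‖y i‖^2 with ht
  have hUU : star U * U = 1 := Unitary.coe_star_mul_self _
  have hUU' : U * star U = 1 := Unitary.coe_mul_star_self _
  -- quadratic form computation
  have key : ∀ f : Fin n → ℝ,
      (star x ⬝ᵥ ((U * diagonal ((↑) ∘ f) * star U) *ᵥ x)).re = ∑ i, f i * t i := by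
    intro f
    rw [← mulVec_mulVec, ← mulVec_mulVec, dotProduct_mulVec]
    have h1 : star x ᵥ* U = star y := by
      rw [hy, star_mulVec]; simp [Matrix.star_eq_conjTranspose]
    rw [h1, dotProduct, Complex.re_sum]
    refine Finset.sum_congr rfl fun i _ => ?_
    have hterm : star y i * (diagonal ((↑) ∘ f) *ᵥ y) i
        = ((f i : ℂ)) * (y i * (starRingEnd ℂ) (y i)) := by
      simp only [mulVec_diagonal, Pi.star_apply, Function.comp_apply, RCLike.star_def]
      ring
    rw [hterm, Complex.mul_conj, ← Complex.ofReal_mul]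
    rw [Complex.ofReal_re, Complex.normSq_eq_norm_sq]
  have hsp : A = U * diagonal ((↑) ∘ lam) * star U := hA.isHermitian.spectral_theorem
  -- the three quadratic forms
  have hA2 : A ^ 2 = U * diagonal ((↑) ∘ fun i => lam i ^ 2) * star U := by
    rw [pow_two, hsp]
    have : diagonal ((↑) ∘ lam) * (star U * U) * diagonal ((↑) ∘ lam)
        = diagonal ((↑) ∘ fun i => lam i ^ 2) := by
      rw [hUU, mul_one, diagonal_mul_diagonal]
      have hf : (fun i => ((↑) ∘ lam) i * ((↑) ∘ lam) i) = ((↑) ∘ fun i => lam i ^ 2 : Fin n → ℂ) := by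
        funext i; simp [Function.comp, sq]
      rw [hf]
    calc U * diagonal ((↑) ∘ lam) * star U * (U * diagonal ((↑) ∘ lam) * star U)
        = U * (diagonal ((↑) ∘ lam) * (star U * U) * diagonal ((↑) ∘ lam)) * star U := by
          noncomm_ring
      _ = U * diagonal ((↑) ∘ fun i => lam i ^ 2) * star U := by rw [this]
  have hlam_pos : ∀ i, 0 < lam i := fun i => hA.eigenvalues_pos i
  have hAinv : A⁻¹ = U * diagonal ((↑) ∘ fun i => (lam i)⁻¹) * star U := by
    apply Matrix.inv_eq_left_inv
    rw [hsp]
    calc U * diagonal ((↑) ∘ fun i => (lam i)⁻¹) * star U * (U * diagonal ((↑) ∘ lam) * star U)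
        = U * (diagonal ((↑) ∘ fun i => (lam i)⁻¹) * (star U * U) * diagonal ((↑) ∘ lam)) * star U := by
          noncomm_ring
      _ = 1 := by
          rw [hUU, mul_one, diagonal_mul_diagonal]
          have : (fun i => ((↑) ∘ fun i => (lam i)⁻¹) i * ((↑) ∘ lam) i) = fun _ : Fin n => (1:ℂ) := by
            funext i
            simp only [Function.comp_apply]
            rw [← Complex.ofReal_mul, inv_mul_cancel₀ (hlam_pos i).ne']
            simp
          rw [this, diagonal_one, mul_one, hUU']
  have ht_nonneg : ∀ i, 0 ≤ t i := fun i => sq_nonneg _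
  -- sums
  have hsum1 : ∑ i, t i = 1 := by
    have h := key (fun _ => 1)
    have : U * diagonal ((↑) ∘ fun _ : Fin n => (1:ℝ)) * star U = 1 := by
      have hf : ((↑) ∘ fun _ : Fin n => (1:ℝ)) = (fun _ : Fin n => (1:ℂ)) := by
        funext i; simp
      rw [hf, diagonal_one, mul_one, hUU']
    rw [this, one_mulVec, hx] at h
    simpa using h.symm
  have ha : (star x ⬝ᵥ (A *ᵥ x)).re = ∑ i, lam i * t i := by rw [hsp]; exact key lam
  have hb : (star x ⬝ᵥ ((A ^ 2) *ᵥ x)).re = ∑ i, lam i ^ 2 * t i := by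
    rw [hA2]; exact key _
  have hc : (star x ⬝ᵥ (A⁻¹ *ᵥ x)).re = ∑ i, (lam i)⁻¹ * t i := by
    rw [hAinv]; exact key _
  rw [ha, hb, hc]
  set a := ∑ i, lam i * t i with hadef
  set b := ∑ i, lam i ^ 2 * t i with hbdef
  -- a ≥ m
  have ham : m ≤ a := by
    calc m = ∑ i, m * t i := by rw [← Finset.mul_sum, hsum1, mul_one]
      _ ≤ a := Finset.sum_le_sum fun i _ =>
          mul_le_mul_of_nonneg_right (heig i).1 (ht_nonneg i)
  have ha_pos : 0 < a := hm.trans_le ham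
  -- pointwise estimate
  have hpt : ∀ i, (lam i)⁻¹ ≤ (M + m - lam i) / (M * m) - (lam i - m) * (M - lam i) / M ^ 3 := by
    intro i
    obtain ⟨h1, h2⟩ := heig i
    have hl : 0 < lam i := hlam_pos i
    rw [div_sub_div _ _ (by positivity) (by positivity : (M:ℝ)^3 ≠ 0), inv_eq_one_div,
      div_le_div_iff₀ hl (by positivity)]
    have hml : m * lam i ≤ M ^ 2 := by nlinarith
    have hprod : 0 ≤ (lam i - m) * (M - lam i) * (M * (M ^ 2 - m * lam i)) :=
      mul_nonneg (mul_nonneg (sub_nonneg.2 h1) (sub_nonneg.2 h2))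
        (mul_nonneg hM.le (sub_nonneg.2 hml))
    nlinarith [hprod]
  have hstep1 : ∑ i, (lam i)⁻¹ * t i
      ≤ (M + m - a) / (M * m) - ((M + m) * a - M * m - b) / M ^ 3 := by
    have : ∑ i, (lam i)⁻¹ * t i
        ≤ ∑ i, ((M + m - lam i) / (M * m) - (lam i - m) * (M - lam i) / M ^ 3) * t i :=
      Finset.sum_le_sum fun i _ => mul_le_mul_of_nonneg_right (hpt i) (ht_nonneg i)
    refine this.trans_eq ?_
    have expand : ∀ i, ((M + m - lam i) / (M * m) - (lam i - m) * (M - lam i) / M ^ 3) * t i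
        = ((M+m)/(M*m)) * t i - (1/(M*m)) * (lam i * t i)
          - ((M+m)/M^3) * (lam i * t i) + (M*m/M^3) * t i + (1/M^3) * (lam i^2 * t i) := by
      intro i; field_simp; ring
    rw [Finset.sum_congr rfl fun i _ => expand i]
    rw [Finset.sum_add_distrib, Finset.sum_add_distrib, Finset.sum_sub_distrib,
      Finset.sum_sub_distrib, ← Finset.mul_sum, ← Finset.mul_sum, ← Finset.mul_sum,
      ← Finset.mul_sum, ← Finset.mul_sum, hsum1]
    field_simp
    ring
  -- Kantorovich step
  have hstep2 : (M + m - a) / (M * m) ≤ (M + m) ^ 2 / (4 * M * m) * a⁻¹ := by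
    have heq : (M + m) ^ 2 / (4 * M * m) * a⁻¹ = (M + m) ^ 2 / (4 * M * m * a) := by
      field_simp
    rw [heq, div_le_div_iff₀ (by positivity) (by positivity)]
    nlinarith [mul_nonneg (mul_nonneg hM.le hm.le) (sq_nonneg (M + m - 2 * a))]
  linarith [hstep1, hstep2]
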